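/- arXiv:2603.02769 — 2 statements merged into one kernel-verified Lean document; each statement's English description precedes it below -/
import Mathlib

section
/- Let (X,d) be a metric space, let m ≥ 3 be an integer, and let K ⊆ X be a compact subset whose Hausdorff dimension satisfies dim_H(K) < (m-2)/2. Then there exists a finite Borel measure ν on X supported in K (i.e. ν(X \ K) = 0) such that the Wolff potential of ν diverges at every point of K: 𝒲^ν(x) = +∞ for every x ∈ K. -/
open Metric MeasureTheory
open scoped ENNReal

/-- The Wolff potential `𝒲^ν(x) = ∫₀¹ (ν(B_r(x)) · r^{2-m})^{2/(m-2)} dr` of a measure `ν`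
on a metric space at a point `x`. -/
noncomputable def wolffPotential {X : Type*} [MetricSpace X] [MeasurableSpace X]
    (m : ℕ) (ν : Measure X) (x : X) : ℝ≥0∞ :=
  ∫⁻ r in Set.Ioc (0 : ℝ) 1,
    (ν (closedBall x r) * ENNReal.ofReal (r ^ ((2 : ℝ) - (m : ℝ)))) ^ ((2 : ℝ) / ((m : ℝ) - 2))

lemma wolff_key_int {a b : ℝ} (ha : 0 < a) (hab : a ≤ b) :
    ∫⁻ r in Set.Ioc a b, ENNReal.ofReal (a * r ^ (-2 : ℝ)) = ENNReal.ofReal (1 - a / b) := by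
  have hb : 0 < b := ha.trans_le hab
  have h0 : (0:ℝ) ∉ Set.uIcc a b := by
    rw [Set.uIcc_of_le hab]
    intro h
    exact absurd h.1 (not_le.2 ha)
  have hint : IntervalIntegrable (fun r : ℝ => a * r ^ (-2:ℝ)) volume a b :=
    (intervalIntegral.intervalIntegrable_rpow (Or.inr h0)).const_mul a
  have hIoc : IntegrableOn (fun r : ℝ => a * r ^ (-2:ℝ)) (Set.Ioc a b) volume := by
    simpa [Set.uIoc_of_le hab] using hint.def'
  rw [← ofReal_integral_eq_lintegral_ofReal hIoc ?nn]
  case nn =>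
    filter_upwards [ae_restrict_mem measurableSet_Ioc] with r hr
    have hr0 : (0:ℝ) < r := ha.trans hr.1
    positivity
  congr 1
  rw [← intervalIntegral.integral_of_le hab, intervalIntegral.integral_const_mul,
    integral_rpow (Or.inr ⟨by norm_num, h0⟩)]
  have : (-2 : ℝ) + 1 = -1 := by norm_num
  rw [this]
  rw [Real.rpow_neg_one, Real.rpow_neg_one]
  field_simp
  ring

lemma wolff_diverge {X : Type*} [MetricSpace X] [MeasurableSpace X]
    (m : ℕ) (hm : 3 ≤ m) (ν : Measure X) (x : X)
    (h : ∀ δ : ℝ, 0 < δ → ∃ ρ : ℝ, 0 < ρ ∧ ρ ≤ δ ∧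
      ENNReal.ofReal (ρ ^ (((m:ℝ) - 2) / 2)) ≤ ν (closedBall x ρ)) :
    wolffPotential m ν x = ⊤ := by
  set s : ℝ := ((m:ℝ) - 2) / 2 with hs_def
  set p : ℝ := 2 / ((m:ℝ) - 2) with hp_def
  have hm3 : (3:ℝ) ≤ (m:ℝ) := by exact_mod_cast hm
  have hm2 : (0:ℝ) < (m:ℝ) - 2 := by linarith
  have hsp : s * p = 1 := by
    rw [hs_def, hp_def]; field_simp
  have h2mp : ((2:ℝ) - m) * p = -2 := by
    rw [hp_def]; field_simp; ring
  -- recursive sequence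
  have key : ∀ σ : ℝ, 0 < σ → ∃ ρ : ℝ, 0 < ρ ∧ ρ ≤ σ / 2 ∧
      ENNReal.ofReal (ρ ^ s) ≤ ν (closedBall x ρ) := fun σ hσ => h (σ/2) (by linarith)
  -- define σ : ℕ → ℝ
  have hrec : ∃ σ : ℕ → ℝ, σ 0 = 1 ∧ ∀ n, 0 < σ (n+1) ∧ σ (n+1) ≤ σ n / 2 ∧
      ENNReal.ofReal (σ (n+1) ^ s) ≤ ν (closedBall x (σ (n+1))) := by
    choose f hf1 hf2 hf3 using key
    refine ⟨fun n => Nat.rec 1 (fun _ σn => if hσ : 0 < σn then f σn hσ else 1) n, rfl, ?_⟩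
    intro n
    simp only []
    set σn := (Nat.rec 1 (fun _ σn => if hσ : 0 < σn then f σn hσ else 1) n : ℝ) with hσn
    have hpos : 0 < σn := by
      clear_value σn
      subst hσn
      induction n with
      | zero => norm_num
      | succ k ih =>
        simp only []
        rw [dif_pos ih]
        exact hf1 _ ih
    rw [dif_pos hpos]
    exact ⟨hf1 _ hpos, hf2 _ hpos, hf3 _ hpos⟩
  obtain ⟨σ, hσ0, hσ⟩ := hrec
  have hσpos : ∀ n, 0 < σ n := by
    intro n; cases n with
    | zero => rw [hσ0]; norm_num
    | succ k => exact (hσ k).1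
  have hσle1 : ∀ n, σ n ≤ 1 := by
    intro n; induction n with
    | zero => rw [hσ0]
    | succ k ih => have := (hσ k).2.1; have := hσpos k; linarith
  -- integrand
  set f : ℝ → ℝ≥0∞ := fun r =>
    (ν (closedBall x r) * ENNReal.ofReal (r ^ ((2:ℝ) - (m:ℝ)))) ^ p with hf_def
  -- lower bound on each dyadic-like annulus
  have annulus : ∀ n, ENNReal.ofReal (1/2 : ℝ) ≤ ∫⁻ r in Set.Ioc (σ (n+1)) (σ n), f r := by
    intro n
    obtain ⟨hpos, hhalf, hmeas⟩ := hσ n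
    have hle : σ (n+1) ≤ σ n := le_trans hhalf (by have := hσpos n; linarith)
    have hlow : ∀ r ∈ Set.Ioc (σ (n+1)) (σ n),
        ENNReal.ofReal (σ (n+1) * r ^ (-2:ℝ)) ≤ f r := by
      intro r hr
      have hr0 : 0 < r := hpos.trans hr.1
      have hball : ENNReal.ofReal (σ (n+1) ^ s) ≤ ν (closedBall x r) :=
        le_trans hmeas (measure_mono (closedBall_subset_closedBall hr.1.le))
      have step1 : ENNReal.ofReal (σ (n+1) ^ s * r ^ ((2:ℝ) - m)) ≤
          ν (closedBall x r) * ENNReal.ofReal (r ^ ((2:ℝ) - (m:ℝ))) := by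
        rw [ENNReal.ofReal_mul (by positivity)]
        exact mul_le_mul_left hball _
      calc ENNReal.ofReal (σ (n+1) * r ^ (-2:ℝ))
          = ENNReal.ofReal (σ (n+1) ^ s * r ^ ((2:ℝ) - m)) ^ p := by
            rw [ENNReal.ofReal_rpow_of_pos (by positivity)]
            congr 1
            rw [Real.mul_rpow (by positivity) (by positivity),
              ← Real.rpow_mul hpos.le, ← Real.rpow_mul hr0.le, hsp, h2mp, Real.rpow_one]
        _ ≤ f r := by
            rw [hf_def]
            exact ENNReal.rpow_le_rpow step1 (by positivity)
    calc ENNReal.ofReal (1/2 : ℝ) ≤ ENNReal.ofReal (1 - σ (n+1) / σ n) := by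
          apply ENNReal.ofReal_le_ofReal
          have h1 : σ (n+1) / σ n ≤ 1/2 := by
            rw [div_le_div_iff₀ (hσpos n) (by norm_num)] at *
            linarith [hhalf]
          linarith
      _ = ∫⁻ r in Set.Ioc (σ (n+1)) (σ n), ENNReal.ofReal (σ (n+1) * r ^ (-2:ℝ)) :=
          (wolff_key_int hpos hle).symm
      _ ≤ ∫⁻ r in Set.Ioc (σ (n+1)) (σ n), f r := by
          apply setLIntegral_mono' measurableSet_Ioc hlow
  -- accumulate
  have acc : ∀ n : ℕ, (n : ℝ≥0∞) * ENNReal.ofReal (1/2) ≤ ∫⁻ r in Set.Ioc (σ n) 1, f r := by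
    intro n
    induction n with
    | zero => simp
    | succ k ih =>
      have hle : σ (k+1) ≤ σ k := by have := (hσ k).2.1; have := hσpos k; linarith
      have hsplit : Set.Ioc (σ (k+1)) 1 = Set.Ioc (σ (k+1)) (σ k) ∪ Set.Ioc (σ k) 1 :=
        (Set.Ioc_union_Ioc_eq_Ioc hle (hσle1 k)).symm
      have : ∫⁻ r in Set.Ioc (σ (k+1)) 1, f r =
          (∫⁻ r in Set.Ioc (σ (k+1)) (σ k), f r) + ∫⁻ r in Set.Ioc (σ k) 1, f r := by
        rw [hsplit]
        apply lintegral_union measurableSet_Ioc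
        exact Set.Ioc_disjoint_Ioc_of_le le_rfl
      rw [this]
      have hcast : ((k+1 : ℕ) : ℝ≥0∞) * ENNReal.ofReal (1/2) =
          ENNReal.ofReal (1/2) + (k : ℝ≥0∞) * ENNReal.ofReal (1/2) := by
        push_cast; ring
      rw [hcast]
      exact add_le_add (annulus k) ih
  -- conclude
  have main : ∀ n : ℕ, (n : ℝ≥0∞) * ENNReal.ofReal (1/2) ≤ wolffPotential m ν x := by
    intro n
    refine (acc n).trans ?_
    unfold wolffPotential
    apply lintegral_mono_set
    intro r hr
    exact ⟨(hσpos n).trans hr.1, hr.2⟩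
  by_contra hne
  obtain ⟨n, hn⟩ : ∃ n : ℕ, wolffPotential m ν x * 2 < n :=
    ENNReal.exists_nat_gt (ENNReal.mul_ne_top hne (by norm_num))
  have h2 : ENNReal.ofReal (1/2 : ℝ) = 2⁻¹ := by
    rw [ENNReal.ofReal_div_of_pos (by norm_num)]
    norm_num
  have hmain := main n
  rw [h2] at hmain
  have : (n : ℝ≥0∞) ≤ wolffPotential m ν x * 2 := by
    calc (n : ℝ≥0∞) = (n : ℝ≥0∞) * 2⁻¹ * 2 := by
          rw [mul_assoc, ENNReal.inv_mul_cancel (by norm_num) (by norm_num), mul_one]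
      _ ≤ wolffPotential m ν x * 2 := mul_le_mul_left hmain 2
  exact absurd this (not_le.2 hn)

lemma rpow_perturb {s : ℝ} (hs : 0 < s) (D c d : ℝ) (hD : 0 ≤ D) (hc : 0 < c) (hd : 0 < d) :
    ∃ η : ℝ, 0 < η ∧ η ≤ d ∧ (D + η) ^ s ≤ D ^ s + c := by
  have hcont : ContinuousAt (fun z : ℝ => (D + z) ^ s) 0 := by
    apply ContinuousAt.comp (g := fun w : ℝ => w ^ s)
    · simpa using Real.continuousAt_rpow_const (D + 0) s (Or.inr hs.le)
    · exact (continuous_const.add continuous_id).continuousAt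
  have hev : ∀ᶠ z in nhds (0:ℝ), (D + z) ^ s < D ^ s + c := by
    have := hcont.eventually_lt_const (by simp [hc] : ((fun z : ℝ => (D + z) ^ s) 0) < D ^ s + c)
    simpa using this
  rw [Metric.eventually_nhds_iff] at hev
  obtain ⟨e, he, hev⟩ := hev
  refine ⟨min d (e/2), by positivity, min_le_left _ _, ?_⟩
  refine (hev ?_).le
  rw [Real.dist_eq, sub_zero, abs_of_pos (by positivity)]
  calc min d (e/2) ≤ e/2 := min_le_right _ _
    _ < e := by linarith

lemma wolff_cover {X : Type*} [MetricSpace X] [MeasurableSpace X] [BorelSpace X]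
    {s : ℝ} (hs : 0 < s) {K : Set X} (hK0 : μH[s] K = 0) {x₀ : X} (hx₀ : x₀ ∈ K)
    {ε δ : ℝ} (hε : 0 < ε) (hδ : 0 < δ) :
    ∃ (y : ℕ → X) (ρ : ℕ → ℝ), (∀ n, y n ∈ K) ∧ (∀ n, 0 < ρ n) ∧ (∀ n, ρ n ≤ δ) ∧
      (K ⊆ ⋃ n, closedBall (y n) (ρ n)) ∧
      ∑' n, ENNReal.ofReal (ρ n ^ s) ≤ ENNReal.ofReal ε := by
  classical
  -- extract a cover from the vanishing Hausdorff measure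
  have h1 : (⨅ (t : ℕ → Set X) (_ : K ⊆ ⋃ n, t n)
      (_ : ∀ n, EMetric.diam (t n) ≤ ENNReal.ofReal (δ/2)),
      ∑' n, ⨆ _ : (t n).Nonempty, EMetric.diam (t n) ^ s) = 0 := by
    refine le_antisymm ?_ (zero_le)
    rw [← hK0, Measure.hausdorffMeasure_apply]
    exact le_iSup₂ (f := fun (r : ℝ≥0∞) (_ : 0 < r) =>
      ⨅ (t : ℕ → Set X) (_ : K ⊆ ⋃ n, t n) (_ : ∀ n, EMetric.diam (t n) ≤ r),
        ∑' n, ⨆ _ : (t n).Nonempty, EMetric.diam (t n) ^ s)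
      (ENNReal.ofReal (δ/2)) (ENNReal.ofReal_pos.2 (by linarith))
  have h2 : (⨅ (t : ℕ → Set X) (_ : K ⊆ ⋃ n, t n)
      (_ : ∀ n, EMetric.diam (t n) ≤ ENNReal.ofReal (δ/2)),
      ∑' n, ⨆ _ : (t n).Nonempty, EMetric.diam (t n) ^ s) < ENNReal.ofReal (ε/2) := by
    rw [h1]; exact ENNReal.ofReal_pos.2 (by linarith)
  rw [iInf_lt_iff] at h2
  obtain ⟨t, h2⟩ := h2
  rw [iInf_lt_iff] at h2
  obtain ⟨htK, h2⟩ := h2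
  rw [iInf_lt_iff] at h2
  obtain ⟨htd, h2⟩ := h2
  -- diameters as reals
  set D : ℕ → ℝ := fun n => (EMetric.diam (t n)).toReal with hD_def
  have hdne : ∀ n, EMetric.diam (t n) ≠ ⊤ := fun n =>
    ((htd n).trans_lt ENNReal.ofReal_lt_top).ne
  have hD0 : ∀ n, 0 ≤ D n := fun n => ENNReal.toReal_nonneg
  have hDδ : ∀ n, D n ≤ δ/2 := fun n =>
    ENNReal.toReal_le_of_le_ofReal (by linarith) (htd n)
  -- perturbations
  have hη : ∀ n : ℕ, ∃ η : ℝ, 0 < η ∧ η ≤ δ/2 ∧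
      (D n + η) ^ s ≤ D n ^ s + ε/2 * (1/2)^(n+1) := fun n =>
    rpow_perturb hs (D n) _ _ (hD0 n) (by positivity) (by linarith)
  choose η hη1 hη2 hη3 using hη
  -- centers
  set y : ℕ → X := fun n => if hne : (t n ∩ K).Nonempty then hne.choose else x₀ with hy_def
  have hyK : ∀ n, y n ∈ K := by
    intro n
    rw [hy_def]
    by_cases hne : (t n ∩ K).Nonempty
    · simp only [dif_pos hne]; exact hne.choose_spec.2
    · simp only [dif_neg hne]; exact hx₀
  refine ⟨y, fun n => D n + η n, hyK, fun n => by have := hη1 n; have := hD0 n; dsimp only; linarith,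
    fun n => by have := hη2 n; have := hDδ n; dsimp only; linarith, ?_, ?_⟩
  · -- cover
    intro x hx
    obtain ⟨n, hn⟩ := Set.mem_iUnion.1 (htK hx)
    refine Set.mem_iUnion.2 ⟨n, ?_⟩
    have hne : (t n ∩ K).Nonempty := ⟨x, hn, hx⟩
    have hyn : y n ∈ t n := by
      rw [hy_def]; simp only [dif_pos hne]; exact hne.choose_spec.1
    have : dist x (y n) ≤ D n := by
      rw [hD_def, dist_edist]
      exact ENNReal.toReal_le_toReal (by simp [edist_ne_top]) (hdne n) |>.2
        (EMetric.edist_le_diam_of_mem hn hyn)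
    have := hη1 n
    simp only [mem_closedBall]
    linarith
  · -- sum estimate
    have hterm : ∀ n, ENNReal.ofReal ((D n + η n) ^ s) ≤
        (⨆ _ : (t n).Nonempty, EMetric.diam (t n) ^ s) + ENNReal.ofReal (ε/2 * (1/2)^(n+1)) := by
      intro n
      calc ENNReal.ofReal ((D n + η n) ^ s)
          ≤ ENNReal.ofReal (D n ^ s + ε/2 * (1/2)^(n+1)) := ENNReal.ofReal_le_ofReal (hη3 n)
        _ = ENNReal.ofReal (D n ^ s) + ENNReal.ofReal (ε/2 * (1/2)^(n+1)) :=
            ENNReal.ofReal_add (by positivity) (by positivity)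
        _ ≤ _ := by
            gcongr
            by_cases hne : (t n).Nonempty
            · rw [iSup_pos hne, ← ENNReal.ofReal_toReal (hdne n),
                ENNReal.ofReal_rpow_of_nonneg (hD0 n) hs.le]
            · have : t n = ∅ := Set.not_nonempty_iff_eq_empty.1 hne
              have hDn : D n = 0 := by rw [hD_def]; simp [this, EMetric.diam, Metric.ediam_empty]
              rw [hDn, Real.zero_rpow hs.ne']
              simp
    calc ∑' n, ENNReal.ofReal ((D n + η n) ^ s)
        ≤ ∑' n, ((⨆ _ : (t n).Nonempty, EMetric.diam (t n) ^ s)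
            + ENNReal.ofReal (ε/2 * (1/2)^(n+1))) := ENNReal.tsum_le_tsum hterm
      _ = (∑' n, ⨆ _ : (t n).Nonempty, EMetric.diam (t n) ^ s)
            + ∑' n, ENNReal.ofReal (ε/2 * (1/2)^(n+1)) := ENNReal.tsum_add
      _ ≤ ENNReal.ofReal (ε/2) + ENNReal.ofReal (ε/2) := by
          gcongr
          have hgeom : ∑' n : ℕ, (1/2:ℝ)^(n+1) = 1 := by
            have h := tsum_geometric_two
            calc ∑' n : ℕ, (1/2:ℝ)^(n+1) = ∑' n : ℕ, (1/2) * (1/2:ℝ)^n := by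
                  congr 1; ext n; ring
              _ = (1/2) * ∑' n : ℕ, (1/2:ℝ)^n := tsum_mul_left
              _ = 1 := by rw [h]; norm_num
          have hsummable : Summable (fun n : ℕ => ε/2 * (1/2:ℝ)^(n+1)) := by
            apply Summable.mul_left
            have h0 : Summable (fun n : ℕ => (1/2:ℝ)^n) :=
              summable_geometric_of_lt_one (by norm_num) (by norm_num)
            exact h0.comp_injective (add_left_injective 1)
          rw [← ENNReal.ofReal_tsum_of_nonneg (fun n => by positivity) hsummable]
          apply ENNReal.ofReal_le_ofReal
          rw [tsum_mul_left, hgeom, mul_one]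
      _ = ENNReal.ofReal ε := by
          rw [← ENNReal.ofReal_add (by linarith) (by linarith)]
          norm_num

/-- If `K` is a compact subset of a metric space with Hausdorff dimension
`dim_H K < (m-2)/2` (`m ≥ 3` an integer), then there is a finite Borel measure `ν`
supported in `K` whose Wolff potential diverges at every point of `K`. -/
theorem exists_measure_wolffPotential_eq_top_of_dimH_lt
    {X : Type*} [MetricSpace X] [MeasurableSpace X] [BorelSpace X]
    (m : ℕ) (hm : 3 ≤ m) (K : Set X) (hK : IsCompact K)
    (hdim : dimH K < ((m : ℝ≥0∞) - 2) / 2) :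
    ∃ ν : Measure X, IsFiniteMeasure ν ∧ ν Kᶜ = 0 ∧
      ∀ x ∈ K, wolffPotential m ν x = ⊤ := by
  rcases K.eq_empty_or_nonempty with hKe | ⟨x₀, hx₀⟩
  · refine ⟨0, inferInstance, by simp, ?_⟩
    intro x hx
    rw [hKe] at hx
    exact absurd hx (Set.notMem_empty x)
  set s : ℝ := ((m:ℝ) - 2) / 2 with hs_def
  have hm3 : (3:ℝ) ≤ (m:ℝ) := by exact_mod_cast hm
  have hs : 0 < s := by rw [hs_def]; linarith
  -- μH[s] K = 0
  have hcast : ((s.toNNReal : ℝ≥0∞)) = ((m : ℝ≥0∞) - 2) / 2 := by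
    show ENNReal.ofReal s = _
    rw [hs_def, ENNReal.ofReal_div_of_pos (by norm_num),
      ENNReal.ofReal_sub _ (by norm_num), ENNReal.ofReal_natCast]
    norm_num
  have hK0 : μH[s] K = 0 := by
    have h := hausdorffMeasure_of_dimH_lt (d := s.toNNReal) (s := K) (by rw [hcast]; exact hdim)
    have : ((s.toNNReal : ℝ)) = s := Real.coe_toNNReal s hs.le
    rwa [this] at h
  -- covers at every scale
  have hc : ∀ j : ℕ, ∃ (y : ℕ → X) (ρ : ℕ → ℝ), (∀ n, y n ∈ K) ∧ (∀ n, 0 < ρ n) ∧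
      (∀ n, ρ n ≤ (1/2:ℝ)^j) ∧ (K ⊆ ⋃ n, closedBall (y n) (ρ n)) ∧
      ∑' n, ENNReal.ofReal (ρ n ^ s) ≤ ENNReal.ofReal ((1/2:ℝ)^j) :=
    fun j => wolff_cover hs hK0 hx₀ (by positivity) (by positivity)
  choose y ρ hyK hρpos hρle hcov hsum using hc
  -- the measure
  set ν : Measure X := Measure.sum
    (fun q : ℕ × ℕ => ENNReal.ofReal (ρ q.1 q.2 ^ s) • Measure.dirac (y q.1 q.2)) with hν_def
  have hν_apply : ∀ A : Set X, MeasurableSet A →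
      ν A = ∑' q : ℕ × ℕ, ENNReal.ofReal (ρ q.1 q.2 ^ s) * Measure.dirac (y q.1 q.2) A := by
    intro A hA
    rw [hν_def, Measure.sum_apply _ hA]
    rfl
  refine ⟨ν, ?_, ?_, ?_⟩
  · -- finite
    constructor
    rw [hν_apply Set.univ MeasurableSet.univ]
    have : ∀ q : ℕ × ℕ, ENNReal.ofReal (ρ q.1 q.2 ^ s) * Measure.dirac (y q.1 q.2) Set.univ
        = ENNReal.ofReal (ρ q.1 q.2 ^ s) := by
      intro q; simp
    rw [tsum_congr this]
    calc ∑' q : ℕ × ℕ, ENNReal.ofReal (ρ q.1 q.2 ^ s)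
        = ∑' (j : ℕ) (n : ℕ), ENNReal.ofReal (ρ j n ^ s) :=
          ENNReal.tsum_prod (f := fun j n => ENNReal.ofReal (ρ j n ^ s))
      _ ≤ ∑' j : ℕ, ENNReal.ofReal ((1/2:ℝ)^j) := ENNReal.tsum_le_tsum hsum
      _ ≤ ∑' j : ℕ, (2⁻¹ : ℝ≥0∞)^j := by
          apply ENNReal.tsum_le_tsum
          intro j
          rw [ENNReal.ofReal_pow (by norm_num : (0:ℝ) ≤ 1/2)]
          have h12 : ENNReal.ofReal (1/2 : ℝ) = 2⁻¹ := by
            rw [ENNReal.ofReal_div_of_pos (by norm_num)]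
            norm_num
          rw [h12]
      _ < ⊤ := by
          rw [ENNReal.tsum_geometric]
          refine ENNReal.inv_lt_top.2 ?_
          rw [tsub_pos_iff_lt]
          exact ENNReal.inv_lt_one.2 (by norm_num)
  · -- supported in K
    rw [hν_apply Kᶜ hK.isClosed.measurableSet.compl]
    apply ENNReal.tsum_eq_zero.2
    intro q
    rw [Measure.dirac_apply' _ hK.isClosed.measurableSet.compl]
    rw [Set.indicator_of_notMem (by simp [hyK q.1 q.2])]
    simp
  · -- divergence
    intro x hx
    apply wolff_diverge m hm
    intro δ hδ
    obtain ⟨j, hj⟩ := exists_pow_lt_of_lt_one hδ (by norm_num : (1/2:ℝ) < 1)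
    obtain ⟨n, hn⟩ := Set.mem_iUnion.1 (hcov j hx)
    refine ⟨ρ j n, hρpos j n, le_trans (hρle j n) hj.le, ?_⟩
    calc ENNReal.ofReal (ρ j n ^ s)
        = ENNReal.ofReal (ρ j n ^ s) * Measure.dirac (y j n) (closedBall x (ρ j n)) := by
          rw [Measure.dirac_apply' _ measurableSet_closedBall,
            Set.indicator_of_mem (by rw [mem_closedBall, dist_comm]; exact hn)]
          simp
      _ ≤ ν (closedBall x (ρ j n)) := by
          rw [hν_apply _ measurableSet_closedBall]
          exact ENNReal.le_tsum (j, n)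
end

section
/- Let (X,d) be a metric space, let m ≥ 3 be an integer, let 0 < s < (m-2)/2, and let K ⊆ X be a set. Suppose that for every integer l ≥ 1 there is a countable family of points x_{l,j} ∈ K and radii r_{l,j} with 0 < r_{l,j} ≤ 2^{-l}, such that K ⊆ ⋃_j B_{r_{l,j}}(x_{l,j}) and Σ_j r_{l,j}^s ≤ 1. Define the atomic measure ν := Σ_{l≥1} Σ_j r_{l,j}^{(m-2)/2} · δ_{x_{l,j}}, where δ_p denotes the Dirac measure at p. Then: (1) ν is a finite measure, with total mass ν(X) ≤ Σ_{l≥1} 2^{-l τ} < ∞ where τ := (m-2)/2 − s > 0; and (2) the Wolff potential of ν diverges at every point of K: 𝒲^ν(x) = +∞ for every x ∈ K. -/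
open Metric MeasureTheory
open scoped ENNReal

/-- Given, for every `l ≥ 1`, a countable cover of `K` by balls
`B_{r_{l,j}}(x_{l,j})` with centers in `K`, radii `0 < r_{l,j} ≤ 2^{-l}` and
`Σ_j r_{l,j}^s ≤ 1` (where `0 < s < (m-2)/2`), the atomic measure
`ν = Σ_{l ≥ 1} Σ_j r_{l,j}^{(m-2)/2} δ_{x_{l,j}}` is finite, with total mass at most
`Σ_{l ≥ 1} 2^{-lτ} < ∞` where `τ = (m-2)/2 - s > 0`, and its Wolff potential diverges
at every point of `K`. -/
theorem atomic_measure_finite_and_wolffPotential_eq_top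
    {X : Type*} [MetricSpace X] [MeasurableSpace X] [BorelSpace X]
    (m : ℕ) (hm : 3 ≤ m) (s : ℝ) (hs0 : 0 < s) (hs : s < ((m : ℝ) - 2) / 2)
    (K : Set X) (x : ℕ → ℕ → X) (r : ℕ → ℕ → ℝ)
    (hxK : ∀ l, 1 ≤ l → ∀ j, x l j ∈ K)
    (hrpos : ∀ l, 1 ≤ l → ∀ j, 0 < r l j)
    (hrle : ∀ l, 1 ≤ l → ∀ j, r l j ≤ (2 : ℝ) ^ (-(l : ℝ)))
    (hcover : ∀ l, 1 ≤ l → K ⊆ ⋃ j : ℕ, closedBall (x l j) (r l j))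
    (hsum : ∀ l, 1 ≤ l → ∑' j : ℕ, ENNReal.ofReal ((r l j) ^ s) ≤ 1)
    (τ : ℝ) (hτ : τ = ((m : ℝ) - 2) / 2 - s)
    (ν : Measure X)
    (hν : ν = Measure.sum fun l : ℕ =>
      if 1 ≤ l then
        Measure.sum fun j : ℕ =>
          ENNReal.ofReal ((r l j) ^ (((m : ℝ) - 2) / 2)) • Measure.dirac (x l j)
      else 0) :
    0 < τ ∧
    ν Set.univ ≤ ∑' l : ℕ, (if 1 ≤ l then ENNReal.ofReal ((2 : ℝ) ^ (-(l : ℝ) * τ)) else 0) ∧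
    (∑' l : ℕ, (if 1 ≤ l then ENNReal.ofReal ((2 : ℝ) ^ (-(l : ℝ) * τ)) else 0)) < ⊤ ∧
    IsFiniteMeasure ν ∧
    ∀ p ∈ K, wolffPotential m ν p = ⊤ := by
  have hτ0 : 0 < τ := by rw [hτ]; linarith
  have hmass : ν Set.univ ≤
      ∑' l : ℕ, (if 1 ≤ l then ENNReal.ofReal ((2 : ℝ) ^ (-(l : ℝ) * τ)) else 0) := by
      have hτ0 : 0 < τ := by rw [hτ]; linarith
      rw [hν, Measure.sum_apply _ MeasurableSet.univ]
      refine ENNReal.tsum_le_tsum fun l => ?_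
      split_ifs with h
      · rw [Measure.sum_apply _ MeasurableSet.univ]
        have hterm : ∀ j : ℕ,
            (ENNReal.ofReal ((r l j) ^ (((m : ℝ) - 2) / 2)) • Measure.dirac (x l j)) Set.univ
            ≤ ENNReal.ofReal ((2 : ℝ) ^ (-(l : ℝ) * τ)) * ENNReal.ofReal ((r l j) ^ s) := by
          intro j
          rw [Measure.smul_apply, smul_eq_mul, Measure.dirac_apply_of_mem (Set.mem_univ _), mul_one]
          rw [← ENNReal.ofReal_mul (by positivity)]
          apply ENNReal.ofReal_le_ofReal
          have hr := hrpos l h j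
          have : ((m : ℝ) - 2) / 2 = τ + s := by rw [hτ]; ring
          rw [this, Real.rpow_add hr]
          gcongr
          calc (r l j) ^ τ ≤ ((2:ℝ) ^ (-(l:ℝ))) ^ τ :=
                Real.rpow_le_rpow hr.le (hrle l h j) hτ0.le
            _ = (2:ℝ) ^ (-(l:ℝ) * τ) := by
                rw [← Real.rpow_mul (by norm_num : (0:ℝ) ≤ 2)]
        calc ∑' j : ℕ, (ENNReal.ofReal ((r l j) ^ (((m : ℝ) - 2) / 2)) • Measure.dirac (x l j)) Set.univ
            ≤ ∑' j : ℕ, ENNReal.ofReal ((2 : ℝ) ^ (-(l : ℝ) * τ)) * ENNReal.ofReal ((r l j) ^ s) :=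
              ENNReal.tsum_le_tsum hterm
          _ = ENNReal.ofReal ((2 : ℝ) ^ (-(l : ℝ) * τ)) * ∑' j : ℕ, ENNReal.ofReal ((r l j) ^ s) :=
              ENNReal.tsum_mul_left
          _ ≤ ENNReal.ofReal ((2 : ℝ) ^ (-(l : ℝ) * τ)) * 1 := by gcongr; exact hsum l h
          _ = _ := mul_one _
      · simp
  have hgeom : (∑' l : ℕ, (if 1 ≤ l then ENNReal.ofReal ((2 : ℝ) ^ (-(l : ℝ) * τ)) else 0)) < ⊤ := by
      have hb : (0:ℝ) ≤ (2:ℝ) ^ (-τ) := (Real.rpow_pos_of_pos two_pos _).le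
      have key : ∀ l : ℕ, (if 1 ≤ l then ENNReal.ofReal ((2 : ℝ) ^ (-(l : ℝ) * τ)) else 0)
          ≤ (ENNReal.ofReal ((2:ℝ) ^ (-τ))) ^ l := by
        intro l
        split_ifs with h
        · rw [← ENNReal.ofReal_pow hb, ← Real.rpow_natCast ((2:ℝ) ^ (-τ)) l,
            ← Real.rpow_mul (by norm_num : (0:ℝ) ≤ 2)]
          apply ENNReal.ofReal_le_ofReal
          rw [show -(l:ℝ) * τ = -τ * l by ring]
        · exact zero_le
      refine lt_of_le_of_lt (ENNReal.tsum_le_tsum key) ?_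
      rw [ENNReal.tsum_geometric]
      apply ENNReal.inv_lt_top.2
      rw [tsub_pos_iff_lt]
      apply ENNReal.ofReal_lt_one.2
      calc (2:ℝ) ^ (-τ) < 2 ^ (0:ℝ) := by
            apply Real.rpow_lt_rpow_of_exponent_lt one_lt_two (by linarith)
        _ = 1 := Real.rpow_zero 2
  have hfin : IsFiniteMeasure ν := ⟨lt_of_le_of_lt hmass hgeom⟩
  refine ⟨hτ0, hmass, hgeom, hfin, ?_⟩
  intro p hp
  have hm3 : (3:ℝ) ≤ (m:ℝ) := by exact_mod_cast hm
  set c : ℝ := ((m : ℝ) - 2) / 2 with hc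
  have hcpos : 0 < c := by rw [hc]; linarith
  set f : ℝ → ℝ≥0∞ := fun t =>
    (ν (closedBall p t) * ENNReal.ofReal (t ^ ((2 : ℝ) - (m : ℝ)))) ^ ((2 : ℝ) / ((m : ℝ) - 2))
    with hf
  -- measurability of f
  have hmono : Monotone fun t => ν (closedBall p t) :=
    fun a b hab => measure_mono (closedBall_subset_closedBall hab)
  have hfm : Measurable f := by
    exact ((hmono.measurable).mul
      (ENNReal.measurable_ofReal.comp (measurable_id.pow measurable_const))).pow
      measurable_const
  -- lower bound on measure of balls containing an atom
  have hball : ∀ l, 1 ≤ l → ∀ j, ∀ B : Set X, MeasurableSet B → x l j ∈ B →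
      ENNReal.ofReal ((r l j) ^ c) ≤ ν B := by
    intro l hl j B hB hxB
    rw [hν, Measure.sum_apply _ hB]
    calc ENNReal.ofReal ((r l j) ^ c)
        = (ENNReal.ofReal ((r l j) ^ c) • Measure.dirac (x l j)) B := by
          rw [Measure.smul_apply, smul_eq_mul, Measure.dirac_apply_of_mem hxB, mul_one]
      _ ≤ (Measure.sum fun j : ℕ =>
            ENNReal.ofReal ((r l j) ^ c) • Measure.dirac (x l j)) B := by
          rw [Measure.sum_apply _ hB]; exact ENNReal.le_tsum j
      _ ≤ _ := by
          refine le_trans ?_ (ENNReal.le_tsum l)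
          rw [if_pos hl]
  -- key step: quarter of mass in every small interval
  have key : ∀ a : ℝ, 0 < a → a ≤ 1 → ∃ ρ : ℝ, 0 < ρ ∧ 2 * ρ ≤ a ∧
      ENNReal.ofReal (1/4) ≤ ∫⁻ t in Set.Ioc ρ (2*ρ), f t := by
    intro a ha ha1
    -- find l with 2 * 2^{-l} ≤ a
    obtain ⟨n, hn⟩ := exists_pow_lt_of_lt_one (by positivity : (0:ℝ) < a/2)
      (by norm_num : (1:ℝ)/2 < 1)
    set l : ℕ := n + 1 with hldef
    have hl1 : 1 ≤ l := Nat.le_add_left 1 n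
    have hla : 2 * (2:ℝ) ^ (-(l:ℝ)) ≤ a := by
      have h1 : (2:ℝ) ^ (-(l:ℝ)) ≤ ((1:ℝ)/2) ^ n := by
        have : (2:ℝ) ^ (-(l:ℝ)) = ((1:ℝ)/2) ^ l := by
          rw [Real.rpow_neg (by norm_num), Real.rpow_natCast, one_div, inv_pow]
        rw [this]
        exact pow_le_pow_of_le_one (by norm_num) (by norm_num) (Nat.le_add_right n 1)
      nlinarith [hn]
    obtain ⟨j, hj⟩ := Set.mem_iUnion.1 (hcover l hl1 hp)
    set ρ : ℝ := r l j with hρdef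
    have hρ : 0 < ρ := hrpos l hl1 j
    have h2ρ : 2 * ρ ≤ a := by
      have := hrle l hl1 j
      linarith
    refine ⟨ρ, hρ, h2ρ, ?_⟩
    -- pointwise lower bound on Ioc ρ (2ρ)
    have hpt : ∀ t ∈ Set.Ioc ρ (2*ρ), ENNReal.ofReal (ρ⁻¹ / 4) ≤ f t := by
      intro t ht
      have htρ : ρ < t := ht.1
      have ht2ρ : t ≤ 2*ρ := ht.2
      have htpos : 0 < t := hρ.trans htρ
      have hmem : x l j ∈ closedBall p t := by
        rw [mem_closedBall, dist_comm]
        exact le_trans (mem_closedBall.1 hj) htρ.le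
      have h1 : ENNReal.ofReal (ρ ^ c) ≤ ν (closedBall p t) :=
        hball l hl1 j _ measurableSet_closedBall hmem
      have h2 : ENNReal.ofReal ((2*ρ) ^ ((2:ℝ) - (m:ℝ))) ≤ ENNReal.ofReal (t ^ ((2:ℝ) - (m:ℝ))) :=
        ENNReal.ofReal_le_ofReal
          (Real.rpow_le_rpow_of_nonpos htpos ht2ρ (by linarith))
      have h3 : (ENNReal.ofReal (ρ ^ c) * ENNReal.ofReal ((2*ρ) ^ ((2:ℝ) - (m:ℝ))))
            ^ ((2:ℝ) / ((m:ℝ) - 2)) ≤ f t := by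
        exact ENNReal.rpow_le_rpow (mul_le_mul' h1 h2)
          (div_pos two_pos (by linarith)).le
      refine le_trans (le_of_eq ?_) h3
      rw [← ENNReal.ofReal_mul (by positivity),
        ENNReal.ofReal_rpow_of_pos (by positivity)]
      congr 1
      -- real computation
      have hme : (2:ℝ) - (m:ℝ) = -(2*c) := by rw [hc]; ring
      have hce : (2:ℝ) / ((m:ℝ) - 2) = 1/c := by rw [hc]; field_simp
      rw [hme, hce,
        Real.mul_rpow (by positivity) (by positivity),
        ← Real.rpow_mul hρ.le, ← Real.rpow_mul (by positivity),
        mul_one_div, div_self hcpos.ne', Real.rpow_one,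
        show -(2*c) * (1/c) = -2 by field_simp,
        show ((-2:ℝ) = -(2:ℕ)) by norm_num,
        Real.rpow_neg (by positivity), Real.rpow_natCast]
      field_simp
      ring
    calc ENNReal.ofReal (1/4)
        = ENNReal.ofReal (ρ⁻¹/4) * ENNReal.ofReal ρ := by
          rw [← ENNReal.ofReal_mul (by positivity)]
          congr 1
          field_simp
      _ = ENNReal.ofReal (ρ⁻¹/4) * volume (Set.Ioc ρ (2*ρ)) := by
          rw [Real.volume_Ioc]
          congr 1
          rw [show 2*ρ - ρ = ρ by ring]
      _ = ∫⁻ _ in Set.Ioc ρ (2*ρ), ENNReal.ofReal (ρ⁻¹/4) := (setLIntegral_const _ _).symm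
      _ ≤ ∫⁻ t in Set.Ioc ρ (2*ρ), f t := setLIntegral_mono hfm hpt
  -- iterate to get divergence
  have main : ∀ n : ℕ, ∀ a : ℝ, 0 < a → a ≤ 1 →
      ENNReal.ofReal (n/4) ≤ ∫⁻ t in Set.Ioc 0 a, f t := by
    intro n
    induction n with
    | zero => intro a _ _; simp
    | succ n ih =>
      intro a ha ha1
      obtain ⟨ρ, hρ, h2ρ, hint⟩ := key a ha ha1
      have hsplit : (∫⁻ t in Set.Ioc 0 ρ, f t) + ∫⁻ t in Set.Ioc ρ (2*ρ), f t
          ≤ ∫⁻ t in Set.Ioc 0 a, f t := by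
        rw [← lintegral_union measurableSet_Ioc
          (Set.Ioc_disjoint_Ioc_of_le le_rfl)]
        apply lintegral_mono_set
        rw [Set.Ioc_union_Ioc_eq_Ioc (le_of_lt hρ) (by linarith)]
        exact Set.Ioc_subset_Ioc le_rfl (by linarith)
      refine le_trans ?_ hsplit
      have : ENNReal.ofReal ((n+1:ℕ)/4) = ENNReal.ofReal (n/4) + ENNReal.ofReal (1/4) := by
        rw [← ENNReal.ofReal_add (by positivity) (by norm_num)]
        push_cast
        ring_nf
      rw [this]
      exact add_le_add (ih ρ hρ (by linarith)) hint
  -- conclude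
  have hW : ∀ n : ℕ, ENNReal.ofReal (n/4) ≤ wolffPotential m ν p := fun n =>
    main n 1 one_pos le_rfl
  by_contra hne
  have hlt : wolffPotential m ν p < ⊤ := lt_top_iff_ne_top.2 hne
  have h4 : ∀ n : ℕ, (n : ℝ≥0∞) ≤ 4 * wolffPotential m ν p := by
    intro n
    calc (n : ℝ≥0∞) = ENNReal.ofReal (4 * (n/4)) := by
          rw [show (4:ℝ) * (n/4) = n by ring, ENNReal.ofReal_natCast]
      _ = ENNReal.ofReal 4 * ENNReal.ofReal (n/4) := ENNReal.ofReal_mul (by norm_num)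
      _ ≤ 4 * wolffPotential m ν p := by
          rw [show ENNReal.ofReal 4 = (4:ℝ≥0∞) by norm_num]
          exact mul_le_mul_right (hW n) 4
  have htop : (⊤ : ℝ≥0∞) ≤ 4 * wolffPotential m ν p := by
    rw [← ENNReal.iSup_natCast]
    exact iSup_le h4
  have : 4 * wolffPotential m ν p < ⊤ := by
    apply ENNReal.mul_lt_top (by norm_num) hlt
  exact absurd (top_le_iff.1 htop) this.ne
end
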